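/- A closed disk d of radius r in the plane can intersect at most 5 pairwise disjoint closed disks, each of radius at least r. -/

import Mathlib

open Real Complex


private lemma half_le_cos {x : ℝ} (h : |x| ≤ Real.pi / 3) : 1/2 ≤ Real.cos x := by
  rw [← Real.cos_abs, ← Real.cos_pi_div_three]
  exact Real.cos_le_cos_of_nonneg_of_le_pi (abs_nonneg _) (by linarith [Real.pi_pos]) h

/-- Among six angles in `(-π, π]`, two of them differ by at most `π/3` circularly. -/
private lemma pigeon_six (θ : Fin 6 → ℝ) (hθ : ∀ i, θ i ∈ Set.Ioc (-Real.pi) Real.pi) :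
    ∃ i j, i ≠ j ∧ 1/2 ≤ Real.cos (θ i - θ j) := by
  have hπ := Real.pi_pos
  set L : ℝ := Real.pi / 3 with hL
  have hL0 : 0 < L := by positivity
  obtain ⟨i₀, -, hi₀⟩ := Finset.exists_mem_eq_inf' (Finset.univ_nonempty) θ
  set m := Finset.univ.inf' Finset.univ_nonempty θ with hm
  have hmle : ∀ i, m ≤ θ i := fun i => Finset.inf'_le _ (Finset.mem_univ i)
  have hub : ∀ i, θ i - m < 2 * Real.pi := by
    intro i
    have h1 := (hθ i).2
    have h2 := (hθ i₀).1
    rw [hi₀]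
    linarith
  have hfl : ∀ i, (0:ℤ) ≤ ⌊(θ i - m) / L⌋ ∧ ⌊(θ i - m) / L⌋ < 6 := by
    intro i
    refine ⟨Int.floor_nonneg.2 (div_nonneg (by linarith [hmle i]) hL0.le), ?_⟩
    rw [Int.floor_lt]
    push_cast
    rw [div_lt_iff₀ hL0]
    have := hub i
    linarith
  set b : Fin 6 → Fin 6 := fun i => ⟨⌊(θ i - m) / L⌋.toNat, by have := hfl i; omega⟩ with hb
  by_cases hinj : Function.Injective b
  · -- b is surjective; find j with bin 5, pair it with the minimizer i₀
    obtain ⟨j, hj⟩ := (Finite.injective_iff_surjective.mp hinj) ⟨5, by norm_num⟩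
    have hj5 : ⌊(θ j - m) / L⌋ = 5 := by
      have : (⌊(θ j - m) / L⌋.toNat : ℕ) = 5 := congrArg Fin.val hj
      have := hfl j; omega
    have h5 : 5 * L ≤ θ j - m := by
      have h1 : (5:ℝ) ≤ (θ j - m) / L := by
        have := Int.floor_le ((θ j - m) / L); rw [hj5] at this; exact_mod_cast this
      calc 5 * L = (5:ℝ) * L := rfl
        _ ≤ ((θ j - m)/L) * L := by nlinarith
        _ = θ j - m := by field_simp
    have hji : j ≠ i₀ := by
      intro h
      rw [h, ← hi₀] at h5
      simp at h5
      nlinarith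
    refine ⟨j, i₀, hji, ?_⟩
    rw [← hi₀]
    rw [← Real.cos_sub_two_pi]
    apply half_le_cos
    have := hub j
    rw [abs_le]
    constructor <;> linarith
  · rw [Function.not_injective_iff] at hinj
    obtain ⟨i, j, hbij, hij⟩ := hinj
    refine ⟨i, j, hij, ?_⟩
    apply half_le_cos
    have hfloor : ⌊(θ i - m) / L⌋ = ⌊(θ j - m) / L⌋ := by
      have : (⌊(θ i - m) / L⌋.toNat : ℕ) = ⌊(θ j - m) / L⌋.toNat := congrArg Fin.val hbij
      have h1 := hfl i; have h2 := hfl j; omega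
    have h1 := Int.floor_le ((θ i - m) / L)
    have h2 := Int.lt_floor_add_one ((θ i - m) / L)
    have h3 := Int.floor_le ((θ j - m) / L)
    have h4 := Int.lt_floor_add_one ((θ j - m) / L)
    rw [hfloor] at h1 h2
    have hd : |(θ i - m) / L - (θ j - m) / L| < 1 := by
      rw [abs_lt]; constructor <;> linarith
    have : (θ i - m) / L - (θ j - m) / L = (θ i - θ j) / L := by ring
    rw [this, abs_div, abs_of_pos hL0, div_lt_one hL0] at hd
    exact hd.le


private lemma re_mul_conj (z w : ℂ) :
    (z * (starRingEnd ℂ) w).re = ‖z‖ * ‖w‖ * Real.cos (z.arg - w.arg) := by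
  conv_lhs => rw [← Complex.norm_mul_exp_arg_mul_I z, ← Complex.norm_mul_exp_arg_mul_I w]
  rw [map_mul, ← Complex.exp_conj]
  simp only [map_mul, Complex.conj_ofReal, Complex.conj_I]
  rw [mul_assoc, mul_comm (Complex.exp _), mul_assoc, ← Complex.exp_add, ← mul_assoc]
  have : (w.arg : ℂ) * -I + (z.arg : ℂ) * I = ((z.arg - w.arg : ℝ) : ℂ) * I := by push_cast; ring
  rw [this]
  rw [show ((‖z‖ : ℂ) * (‖w‖ : ℂ)) = ((‖z‖ * ‖w‖ : ℝ) : ℂ) by push_cast; ring]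
  rw [Complex.re_ofReal_mul, Complex.exp_ofReal_mul_I_re]

private lemma norm_sub_le_max {z w : ℂ} (h : 1/2 ≤ Real.cos (z.arg - w.arg)) :
    ‖z - w‖ ≤ max ‖z‖ ‖w‖ := by
  have key : ‖z - w‖^2 ≤ ‖z‖^2 + ‖w‖^2 - ‖z‖ * ‖w‖ := by
    have h1 : ‖z - w‖^2 = Complex.normSq (z - w) := by
      rw [Complex.sq_norm]
    have h2 : ‖z‖^2 = Complex.normSq z := by rw [Complex.sq_norm]
    have h3 : ‖w‖^2 = Complex.normSq w := by rw [Complex.sq_norm]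
    rw [h1, h2, h3, Complex.normSq_sub, re_mul_conj]
    have hab : ‖z‖ * ‖w‖ = ‖z‖ * ‖w‖ := by
      rfl
    rw [hab]
    nlinarith [mul_nonneg (norm_nonneg z) (norm_nonneg w)]
  rcases le_total ‖z‖ ‖w‖ with hc | hc
  · rw [max_eq_right hc]; nlinarith [norm_nonneg (z - w), norm_nonneg z, norm_nonneg w]
  · rw [max_eq_left hc]; nlinarith [norm_nonneg (z - w), norm_nonneg z, norm_nonneg w]


theorem disk_meets_at_most_five (c : EuclideanSpace ℝ (Fin 2)) (r : ℝ) (hr : 0 ≤ r)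
    (S : Finset (EuclideanSpace ℝ (Fin 2) × ℝ))
    (hrad : ∀ d ∈ S, r ≤ d.2)
    (hdisj : (S : Set (EuclideanSpace ℝ (Fin 2) × ℝ)).Pairwise fun d e =>
      Disjoint (Metric.closedBall d.1 d.2) (Metric.closedBall e.1 e.2))
    (hint : ∀ d ∈ S, (Metric.closedBall d.1 d.2 ∩ Metric.closedBall c r).Nonempty) :
    S.card ≤ 5 := by
  by_contra hcard
  push_neg at hcard
  obtain ⟨T, hTS, hT6⟩ := Finset.exists_subset_card_eq (show 6 ≤ S.card from hcard)
  have : Fintype.card T = 6 := by rw [Fintype.card_coe]; exact hT6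
  set e := Fintype.equivFinOfCardEq this with he
  set g : Fin 6 → EuclideanSpace ℝ (Fin 2) × ℝ := fun i => ((e.symm i : T) : _) with hg
  have hgS : ∀ i, g i ∈ S := fun i => hTS (e.symm i).2
  have hginj : Function.Injective g :=
    Subtype.val_injective.comp e.symm.injective
  -- transfer to ℂ
  set F : EuclideanSpace ℝ (Fin 2) ≃ₗᵢ[ℝ] ℂ := (Complex.orthonormalBasisOneI.repr).symm with hF
  set z : Fin 6 → ℂ := fun i => F (g i).1 - F c with hz
  have hnorm : ∀ i, ‖z i‖ = dist (g i).1 c := by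
    intro i
    rw [hz]
    rw [← dist_eq_norm, F.dist_map]
  have hnorm2 : ∀ i j, ‖z i - z j‖ = dist (g i).1 (g j).1 := by
    intro i j
    have : z i - z j = F (g i).1 - F (g j).1 := by rw [hz]; ring
    rw [this, ← dist_eq_norm, F.dist_map]
  have hle : ∀ i, ‖z i‖ ≤ r + (g i).2 := by
    intro i
    obtain ⟨p, hp1, hp2⟩ := hint _ (hgS i)
    rw [hnorm]
    calc dist (g i).1 c ≤ dist (g i).1 p + dist p c := dist_triangle _ _ _
      _ ≤ (g i).2 + r := by
          have := Metric.mem_closedBall.mp hp1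
          have := Metric.mem_closedBall.mp hp2
          rw [dist_comm (g i).1 p]
          linarith
      _ = r + (g i).2 := by ring
  have hsep : ∀ i j, i ≠ j → (g i).2 + (g j).2 < ‖z i - z j‖ := by
    intro i j hij
    rw [hnorm2]
    have hne : g i ≠ g j := fun h => hij (hginj h)
    have hd := hdisj (hgS i) (hgS j) hne
    have h1 : (0:ℝ) ≤ (g i).2 := le_trans hr (hrad _ (hgS i))
    have h2 : (0:ℝ) ≤ (g j).2 := le_trans hr (hrad _ (hgS j))
    exact (disjoint_closedBall_closedBall_iff h1 h2).mp hd
  have hz0 : ∀ i, z i ≠ 0 := by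
    intro i hzi
    have hij : i ≠ i + 1 := by omega
    have := hsep i (i+1) hij
    rw [hzi, zero_sub, norm_neg] at this
    have h1 := hle (i+1)
    have h2 : r ≤ (g i).2 := hrad _ (hgS i)
    linarith
  obtain ⟨i, j, hij, hcos⟩ := pigeon_six (fun i => (z i).arg) (fun i => Complex.arg_mem_Ioc _)
  have hmax := norm_sub_le_max (z := z i) (w := z j) hcos
  have hri : r ≤ (g i).2 := hrad _ (hgS i)
  have hrj : r ≤ (g j).2 := hrad _ (hgS j)
  have : ‖z i - z j‖ ≤ (g i).2 + (g j).2 := by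
    calc ‖z i - z j‖ ≤ max ‖z i‖ ‖z j‖ := hmax
      _ ≤ max (r + (g i).2) (r + (g j).2) := max_le_max (hle i) (hle j)
      _ ≤ (g i).2 + (g j).2 := by
          apply max_le <;> linarith
  linarith [hsep i j hij]
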